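/- There exists a universal constant C > 0 such that for every λ > 1 there is δ > 0 so that for every nonempty finite set Y, every positive integer n with |Y| ≤ δn, and every real M ≥ 1, the number of functions x : Y → ℤ with ∑_{y∈Y} x(y)² ≤ M²·n is at most C · λⁿ · M^{|Y|}. -/

import Mathlib

universe u

open Finset Real

private lemma sq_div_four_le_exp {x : ℝ} (hx : 0 ≤ x) : x ^ 2 / 4 ≤ Real.exp x := by
  have h := Real.add_one_le_exp (x / 2)
  have h2 : Real.exp (x / 2) ^ 2 = Real.exp x := by
    rw [sq, ← Real.exp_add]; ring_nf
  nlinarith [Real.exp_pos (x / 2)]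

private lemma half_le_one_sub_exp {u : ℝ} (h0 : 0 ≤ u) (h1 : u ≤ 1) :
    u / 2 ≤ 1 - Real.exp (-u) := by
  have h := Real.add_one_le_exp u
  have hp := Real.exp_pos u
  have he : Real.exp (-u) * Real.exp u = 1 := by
    rw [← Real.exp_add]; simp
  nlinarith [Real.exp_pos (-u)]

private lemma my_geom_sum_le {r : ℝ} (h0 : 0 ≤ r) (h1 : r < 1) (N : ℕ) :
    ∑ i ∈ Finset.range N, r ^ i ≤ 1 / (1 - r) := by
  have h2 : 0 < 1 - r := by linarith
  rw [le_div_iff₀ h2]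
  have := geom_sum_mul r N
  have h3 : (∑ i ∈ Finset.range N, r ^ i) * (1 - r) = 1 - r ^ N := by nlinarith
  have h4 : 0 ≤ r ^ N := pow_nonneg h0 N
  linarith

private lemma theta_bound {t : ℝ} (ht : 0 < t) (ht4 : t ≤ 1/4) (K : ℕ) :
    ∑ k ∈ Finset.Icc (-(K:ℤ)) (K:ℤ), Real.exp (-(t * (k:ℝ)^2)) ≤ 6 / Real.sqrt t := by
  set s := Real.sqrt t with hs
  have hs0 : 0 < s := Real.sqrt_pos.mpr ht
  have hst : s ^ 2 = t := Real.sq_sqrt ht.le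
  have hs2 : s ≤ 1/2 := by
    rw [hs, show (1/2:ℝ) = Real.sqrt (1/4) by
      rw [show (1/4:ℝ) = (1/2)^2 by norm_num, Real.sqrt_sq (by norm_num : (0:ℝ) ≤ 1/2)]]
    exact Real.sqrt_le_sqrt ht4
  set A := (Finset.range (K+1)).image (fun j : ℕ => (j:ℤ)) with hA
  set B := (Finset.range (K+1)).image (fun j : ℕ => -(j:ℤ)) with hB
  have hsub : Finset.Icc (-(K:ℤ)) (K:ℤ) ⊆ A ∪ B := by
    intro k hk
    simp only [Finset.mem_Icc] at hk
    simp only [hA, hB, Finset.mem_union, Finset.mem_image, Finset.mem_range]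
    rcases le_or_gt 0 k with h | h
    · exact Or.inl ⟨k.toNat, by omega, by omega⟩
    · exact Or.inr ⟨(-k).toNat, by omega, by omega⟩
  have step1 : ∑ k ∈ Finset.Icc (-(K:ℤ)) (K:ℤ), Real.exp (-(t * (k:ℝ)^2)) ≤
      ∑ k ∈ A ∪ B, Real.exp (-(t * (k:ℝ)^2)) :=
    Finset.sum_le_sum_of_subset_of_nonneg hsub (fun _ _ _ => (Real.exp_pos _).le)
  have step2 : ∑ k ∈ A ∪ B, Real.exp (-(t * (k:ℝ)^2)) ≤
      (∑ k ∈ A, Real.exp (-(t * (k:ℝ)^2))) + ∑ k ∈ B, Real.exp (-(t * (k:ℝ)^2)) := by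
    have := Finset.sum_union_inter (s₁ := A) (s₂ := B) (f := fun k : ℤ => Real.exp (-(t * (k:ℝ)^2)))
    have hnn : (0:ℝ) ≤ ∑ k ∈ A ∩ B, Real.exp (-(t * (k:ℝ)^2)) :=
      Finset.sum_nonneg fun _ _ => (Real.exp_pos _).le
    linarith
  have hAeq : ∑ k ∈ A, Real.exp (-(t * (k:ℝ)^2)) =
      ∑ j ∈ Finset.range (K+1), Real.exp (-(t * (j:ℝ)^2)) := by
    rw [hA, Finset.sum_image (by intro a _ b _ h; beta_reduce at h; exact_mod_cast h)]
    norm_num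
  have hBeq : ∑ k ∈ B, Real.exp (-(t * (k:ℝ)^2)) =
      ∑ j ∈ Finset.range (K+1), Real.exp (-(t * (j:ℝ)^2)) := by
    rw [hB, Finset.sum_image (by intro a _ b _ h; beta_reduce at h; omega)]
    apply Finset.sum_congr rfl
    intro j _
    norm_num
  have step3 : ∑ j ∈ Finset.range (K+1), Real.exp (-(t * (j:ℝ)^2)) ≤
      Real.exp 1 * ∑ j ∈ Finset.range (K+1), Real.exp (-(2*s)) ^ j := by
    rw [Finset.mul_sum]
    apply Finset.sum_le_sum
    intro j _
    have h1 : -(t * (j:ℝ)^2) ≤ 1 + (j:ℝ) * (-(2*s)) := by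
      nlinarith [sq_nonneg (s * (j:ℝ) - 1), Nat.cast_nonneg (α := ℝ) j]
    calc Real.exp (-(t * (j:ℝ)^2)) ≤ Real.exp (1 + (j:ℝ) * (-(2*s))) := Real.exp_le_exp.mpr h1
      _ = Real.exp 1 * Real.exp (-(2*s)) ^ j := by
          rw [Real.exp_add, Real.exp_nat_mul]
  have hr0 : (0:ℝ) ≤ Real.exp (-(2*s)) := (Real.exp_pos _).le
  have hr1 : Real.exp (-(2*s)) < 1 := Real.exp_lt_one_iff.mpr (by linarith)
  have step4 : ∑ j ∈ Finset.range (K+1), Real.exp (-(2*s)) ^ j ≤ 1 / (1 - Real.exp (-(2*s))) :=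
    my_geom_sum_le hr0 hr1 (K+1)
  have step5 : 1 / (1 - Real.exp (-(2*s))) ≤ 1 / s := by
    have := half_le_one_sub_exp (u := 2*s) (by linarith) (by linarith)
    apply one_div_le_one_div_of_le hs0
    linarith
  have hexp1 : Real.exp 1 ≤ 3 := by
    have := Real.exp_one_lt_d9
    linarith
  have hsum_nonneg : (0:ℝ) ≤ ∑ j ∈ Finset.range (K+1), Real.exp (-(2*s)) ^ j :=
    Finset.sum_nonneg fun _ _ => pow_nonneg hr0 _
  calc ∑ k ∈ Finset.Icc (-(K:ℤ)) (K:ℤ), Real.exp (-(t * (k:ℝ)^2))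
      ≤ (∑ k ∈ A, Real.exp (-(t * (k:ℝ)^2))) + ∑ k ∈ B, Real.exp (-(t * (k:ℝ)^2)) :=
        step1.trans step2
    _ = 2 * ∑ j ∈ Finset.range (K+1), Real.exp (-(t * (j:ℝ)^2)) := by
        rw [hAeq, hBeq]; ring
    _ ≤ 2 * (Real.exp 1 * (1 / (1 - Real.exp (-(2*s))))) := by
        have := step3.trans (by
          exact mul_le_mul_of_nonneg_left step4 (Real.exp_pos 1).le)
        linarith
    _ ≤ 2 * (3 * (1 / s)) := by
        have h5 : 0 ≤ 1 / (1 - Real.exp (-(2*s))) := by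
          have : 0 < 1 - Real.exp (-(2*s)) := by linarith
          positivity
        have := mul_le_mul hexp1 step5 (by positivity) (by norm_num)
        linarith
    _ = 6 / s := by ring

set_option maxHeartbeats 1000000 in
theorem stmt5 : ∃ C : ℝ, 0 < C ∧ ∀ lam : ℝ, 1 < lam → ∃ δ : ℝ, 0 < δ ∧
    ∀ (Y : Type u) [Fintype Y], Nonempty Y → ∀ n : ℕ, 0 < n →
      (Fintype.card Y : ℝ) ≤ δ * n → ∀ M : ℝ, 1 ≤ M →
      {x : Y → ℤ | (∑ y : Y, (x y : ℝ) ^ 2) ≤ M ^ 2 * n}.Finite ∧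
      (Nat.card {x : Y → ℤ // (∑ y : Y, (x y : ℝ) ^ 2) ≤ M ^ 2 * n} : ℝ) ≤
        C * lam ^ n * M ^ Fintype.card Y := by
  refine ⟨1, one_pos, fun lam hlam => ?_⟩
  have hL : 0 < Real.log lam := Real.log_pos hlam
  have hlam0 : (0:ℝ) < lam := lt_trans one_pos hlam
  refine ⟨min (Real.log lam ^ 2 / (36 * Real.exp 1 ^ 2)) (1/4),
    lt_min (by positivity) (by norm_num), ?_⟩
  intro Y _ hY n hn hcard M hM
  classical
  set δ := min (Real.log lam ^ 2 / (36 * Real.exp 1 ^ 2)) (1/4) with hδdef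
  have hδ0 : 0 < δ := lt_min (by positivity) (by norm_num)
  have hδ4 : δ ≤ 1/4 := min_le_right _ _
  have hδL : δ ≤ Real.log lam ^ 2 / (36 * Real.exp 1 ^ 2) := min_le_left _ _
  have hM0 : (0:ℝ) < M := lt_of_lt_of_le one_pos hM
  have hn0 : (0:ℝ) < n := by exact_mod_cast hn
  set d := Fintype.card Y with hd
  have hd0 : 0 < d := Fintype.card_pos
  have hd0' : (0:ℝ) < d := by exact_mod_cast hd0
  set K := ⌊M * Real.sqrt n⌋₊ with hK
  set S : Set (Y → ℤ) := {x | (∑ y : Y, (x y : ℝ) ^ 2) ≤ M ^ 2 * n} with hS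
  have hmem : ∀ x ∈ S, ∀ y : Y, x y ∈ Finset.Icc (-(K:ℤ)) (K:ℤ) := by
    intro x hx y
    have hx' : (∑ y : Y, (x y : ℝ) ^ 2) ≤ M ^ 2 * n := hx
    have h1 : (x y : ℝ)^2 ≤ M^2 * n := by
      refine le_trans ?_ hx'
      exact Finset.single_le_sum (f := fun y => (x y:ℝ)^2) (fun i _ => sq_nonneg _)
        (Finset.mem_univ y)
    have h2 : |(x y : ℝ)| ≤ M * Real.sqrt n := by
      have hMn : (M * Real.sqrt n)^2 = M^2 * n := by
        rw [mul_pow, Real.sq_sqrt hn0.le]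
      rw [← Real.sqrt_sq_eq_abs,
        show M * Real.sqrt n = Real.sqrt ((M * Real.sqrt n)^2) from
          (Real.sqrt_sq (by positivity)).symm]
      exact Real.sqrt_le_sqrt (by rw [hMn]; exact h1)
    have h3 : ((x y).natAbs : ℝ) ≤ M * Real.sqrt n := by
      rw [Nat.cast_natAbs]
      exact_mod_cast h2
    have h4 : (x y).natAbs ≤ K := Nat.le_floor h3
    simp only [Finset.mem_Icc]
    omega
  have hfin : S.Finite := by
    apply Set.Finite.subset
      (Finset.finite_toSet (Fintype.piFinset fun _ : Y => Finset.Icc (-(K:ℤ)) (K:ℤ)))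
    intro x hx
    simp only [Finset.mem_coe, Fintype.mem_piFinset]
    exact hmem x hx
  refine ⟨hfin, ?_⟩
  set F := hfin.toFinset with hF
  have hdne : (d:ℝ) ≠ 0 := hd0'.ne'
  have hMne : M ≠ 0 := hM0.ne'
  have hnne : (n:ℝ) ≠ 0 := hn0.ne'
  have hcardN : Nat.card {x : Y → ℤ // (∑ y : Y, (x y : ℝ) ^ 2) ≤ M ^ 2 * n} = F.card := by
    have h1 : Nat.card ↥S = S.ncard := Nat.card_coe_set_eq S
    have h2 : S.ncard = F.card := Set.ncard_eq_toFinset_card _ hfin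
    exact h1.trans h2
  have hcardS : (Nat.card {x : Y → ℤ // (∑ y : Y, (x y : ℝ) ^ 2) ≤ M ^ 2 * n} : ℝ)
      = (F.card : ℝ) := by exact_mod_cast hcardN
  -- parameters
  set t := (d:ℝ) / (M^2 * n) with ht
  have ht0 : 0 < t := by positivity
  have htop : t * (M^2 * n) = (d:ℝ) := by
    rw [ht]; field_simp
  have hdδn : (d:ℝ) ≤ δ * n := hcard
  have hM2 : (1:ℝ) ≤ M^2 := by nlinarith
  have ht4 : t ≤ 1/4 := by
    rw [ht, div_le_iff₀ (by positivity)]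
    calc (d:ℝ) ≤ δ * n := hdδn
      _ ≤ 1/4 * n := by nlinarith
      _ ≤ 1/4 * (M^2 * n) := by nlinarith
  set θ := ∑ k ∈ Finset.Icc (-(K:ℤ)) (K:ℤ), Real.exp (-(t * (k:ℝ)^2)) with hθ
  have hθ0 : 0 ≤ θ := Finset.sum_nonneg fun _ _ => (Real.exp_pos _).le
  set Bx := Fintype.piFinset (fun _ : Y => Finset.Icc (-(K:ℤ)) (K:ℤ)) with hBx
  have hFB : F ⊆ Bx := by
    intro x hx
    rw [hF, Set.Finite.mem_toFinset] at hx
    rw [hBx, Fintype.mem_piFinset]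
    exact hmem x hx
  have main : (F.card : ℝ) ≤ Real.exp (t * (M^2*n)) * θ ^ d := by
    calc (F.card : ℝ) = ∑ _x ∈ F, (1:ℝ) := by simp
      _ ≤ ∑ x ∈ F, Real.exp (t * (M^2*n - ∑ y : Y, (x y : ℝ)^2)) := by
          apply Finset.sum_le_sum
          intro x hx
          rw [hF, Set.Finite.mem_toFinset] at hx
          have hxle : (∑ y : Y, (x y:ℝ)^2) ≤ M^2*n := hx
          exact Real.one_le_exp (by nlinarith)
      _ ≤ ∑ x ∈ Bx, Real.exp (t * (M^2*n - ∑ y : Y, (x y:ℝ)^2)) :=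
          Finset.sum_le_sum_of_subset_of_nonneg hFB (fun _ _ _ => (Real.exp_pos _).le)
      _ = ∑ x ∈ Bx, Real.exp (t*(M^2*n)) * ∏ y : Y, Real.exp (-(t * (x y:ℝ)^2)) := by
          apply Finset.sum_congr rfl
          intro x _
          rw [← Real.exp_sum, ← Real.exp_add]
          congr 1
          rw [Finset.sum_neg_distrib, ← Finset.mul_sum]
          ring
      _ = Real.exp (t*(M^2*n)) * ∑ x ∈ Bx, ∏ y : Y, Real.exp (-(t * (x y:ℝ)^2)) := by
          rw [Finset.mul_sum]
      _ = Real.exp (t*(M^2*n)) * ∏ _y : Y, θ := by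
          congr 1
          rw [hθ, hBx]
          exact Finset.sum_prod_piFinset (Finset.Icc (-(K:ℤ)) (K:ℤ))
            (fun (_ : Y) (k : ℤ) => Real.exp (-(t * (k:ℝ)^2)))
      _ = Real.exp (t*(M^2*n)) * θ ^ d := by
          rw [Finset.prod_const, Finset.card_univ, hd]
  have hexp_d : Real.exp (t*(M^2*n)) = Real.exp 1 ^ d := by
    rw [htop, show ((d:ℝ)) = (d:ℕ) * (1:ℝ) by ring, Real.exp_nat_mul]
  have hθb : θ ≤ 6 / Real.sqrt t := theta_bound ht0 ht4 K
  have main2 : (F.card : ℝ) ≤ (Real.exp 1 * (6 / Real.sqrt t)) ^ d := by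
    rw [mul_pow]
    calc (F.card : ℝ) ≤ Real.exp (t * (M^2*n)) * θ ^ d := main
      _ = Real.exp 1 ^ d * θ ^ d := by rw [hexp_d]
      _ ≤ Real.exp 1 ^ d * (6 / Real.sqrt t) ^ d := by
          apply mul_le_mul_of_nonneg_left (pow_le_pow_left₀ hθ0 hθb d) (by positivity)
  -- analytic part
  set m := (n:ℝ) / d with hm
  have hm0 : 0 < m := by positivity
  have hmδ : 1/δ ≤ m := by
    rw [hm, div_le_div_iff₀ hδ0 hd0']
    nlinarith
  have hmL : 36 * Real.exp 1 ^ 2 ≤ m * Real.log lam ^ 2 := by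
    have h1 : δ * (36 * Real.exp 1 ^ 2) ≤ Real.log lam ^ 2 := by
      rw [← le_div_iff₀ (by positivity)]
      exact hδL
    have h2 : (1:ℝ) ≤ m * δ := by
      rw [← div_le_iff₀ hδ0]
      simpa [one_div] using hmδ
    nlinarith [mul_le_mul_of_nonneg_left h1 hm0.le,
      mul_le_mul_of_nonneg_right h2 (by positivity : (0:ℝ) ≤ 36 * Real.exp 1 ^ 2)]
  have key1 : 6 * Real.exp 1 * Real.sqrt m ≤ lam ^ (m:ℝ) := by
    have hrw : lam ^ (m:ℝ) = Real.exp (Real.log lam * m) := by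
      rw [Real.rpow_def_of_pos hlam0]
    have hsq : (6 * Real.exp 1 * Real.sqrt m)^2 = 36 * Real.exp 1 ^ 2 * m := by
      rw [mul_pow, mul_pow, Real.sq_sqrt hm0.le]; ring
    have hsq2 : (lam ^ (m:ℝ))^2 = Real.exp (2 * (Real.log lam * m)) := by
      rw [hrw, sq, ← Real.exp_add]; ring_nf
    have hexp_lb : (2 * (Real.log lam * m))^2 / 4 ≤ Real.exp (2 * (Real.log lam * m)) :=
      sq_div_four_le_exp (by positivity)
    have hsqle : (6 * Real.exp 1 * Real.sqrt m)^2 ≤ (lam ^ (m:ℝ))^2 := by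
      rw [hsq, hsq2]
      refine le_trans ?_ hexp_lb
      nlinarith
    have h60 : 0 ≤ 6 * Real.exp 1 * Real.sqrt m := by positivity
    have hl0 : 0 ≤ lam ^ (m:ℝ) := (Real.rpow_pos_of_pos hlam0 m).le
    calc 6 * Real.exp 1 * Real.sqrt m = Real.sqrt ((6 * Real.exp 1 * Real.sqrt m)^2) :=
          (Real.sqrt_sq h60).symm
      _ ≤ Real.sqrt ((lam ^ (m:ℝ))^2) := Real.sqrt_le_sqrt hsqle
      _ = lam ^ (m:ℝ) := Real.sqrt_sq hl0
  have key2 : (6 * Real.exp 1 * Real.sqrt m) ^ d ≤ lam ^ n := by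
    calc (6 * Real.exp 1 * Real.sqrt m) ^ d ≤ (lam ^ (m:ℝ)) ^ d :=
          pow_le_pow_left₀ (by positivity) key1 d
      _ = lam ^ (m * (d:ℝ)) := by
          rw [← Real.rpow_natCast (lam ^ (m:ℝ)) d, ← Real.rpow_mul hlam0.le]
      _ = lam ^ ((n:ℕ):ℝ) := by
          congr 1
          rw [hm]; field_simp
      _ = lam ^ n := Real.rpow_natCast lam n
  have hid : Real.exp 1 * (6 / Real.sqrt t) = M * (6 * Real.exp 1 * Real.sqrt m) := by
    have hMm : Real.sqrt (M^2 * m) = M * Real.sqrt m := by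
      rw [Real.sqrt_mul (sq_nonneg M), Real.sqrt_sq hM0.le]
    have htm : t * (M^2 * m) = 1 := by
      rw [ht, hm]; field_simp
    have hprod : Real.sqrt t * (M * Real.sqrt m) = 1 := by
      rw [← hMm, ← Real.sqrt_mul ht0.le, htm, Real.sqrt_one]
    have hst0 : 0 < Real.sqrt t := Real.sqrt_pos.mpr ht0
    have h6 : 6 / Real.sqrt t = 6 * (M * Real.sqrt m) := by
      rw [div_eq_iff hst0.ne']
      linear_combination -6 * hprod
    rw [h6]; ring
  calc (Nat.card {x : Y → ℤ // (∑ y : Y, (x y : ℝ) ^ 2) ≤ M ^ 2 * n} : ℝ)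
      = (F.card : ℝ) := hcardS
    _ ≤ (Real.exp 1 * (6 / Real.sqrt t)) ^ d := main2
    _ = (M * (6 * Real.exp 1 * Real.sqrt m)) ^ d := by rw [hid]
    _ = M ^ d * (6 * Real.exp 1 * Real.sqrt m) ^ d := mul_pow _ _ _
    _ ≤ M ^ d * lam ^ n := by
        apply mul_le_mul_of_nonneg_left key2 (by positivity)
    _ = 1 * lam ^ n * M ^ d := by ring
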